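/- Let R be the calculus with axioms (R₁)–(R₄). For every nonempty word α over 𝒜 and all 𝒜-formulas A, B with word(A) = word(B) = α, one has R ⊢ A ⇒ B: there exist formulas C₀ = A, C₁, …, C_n = B (n ≥ 0) such that R ⊢ C_i → C_{i+1} for all 0 ≤ i ≤ n−1. -/

import Mathlib

namespace PC

/-- `{→}`-formulas over a countably infinite set of propositional variables. -/
inductive Fml : Type where
  | var : ℕ → Fml
  | imp : Fml → Fml → Fml
deriving DecidableEq

namespace Fml

/-- Application of a substitution to a formula. -/
def subst (σ : ℕ → Fml) : Fml → Fml
  | var n => σ n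
  | imp A B => imp (subst σ A) (subst σ B)

/-- The set of variables of a formula. -/
def fvars : Fml → Finset ℕ
  | var n => {n}
  | imp A B => fvars A ∪ fvars B

/-- Derivability from a set of axioms by modus ponens and substitution. -/
inductive Deriv (P : Set Fml) : Fml → Prop
  | ax {A : Fml} : A ∈ P → Deriv P A
  | mp {A B : Fml} : Deriv P A → Deriv P (imp A B) → Deriv P B
  | sub {A : Fml} (σ : ℕ → Fml) : Deriv P A → Deriv P (subst σ A)

end Fml

/-- `B̂`: the result of substituting `B` for the variable `x` (= `var 0`) in `x̂`. -/
def hat (xhat B : Fml) : Fml := Fml.subst (fun n => if n = 0 then B else Fml.var n) xhat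

/-- `A ∘ B := ((B̂ → B̂) → B̂) → (Â → ((B̂ → B̂) → B̂))`. -/
def circ (xhat A B : Fml) : Fml :=
  .imp (.imp (.imp (hat xhat B) (hat xhat B)) (hat xhat B))
    (.imp (hat xhat A) (.imp (.imp (hat xhat B) (hat xhat B)) (hat xhat B)))

/-- `A · B := ((A → A) → A) ∘ B`. -/
def dot (xhat A B : Fml) : Fml := circ xhat (.imp (.imp A A) A) B

/-- `Cform i` is the formula `p → (p → … (p → p))` with `i` antecedents `p`,
where `p := var 0`. -/
def Cform : ℕ → Fml
  | 0 => .var 0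
  | n + 1 => .imp (.var 0) (Cform n)

/-- The code of the letter `aᵢ` (letters of the alphabet `𝒜 = {a₁, …, a_m}` are the
elements of `Fin m`, the letter `a : Fin m` standing for `a_{a+1}`): `Cᵢ ∘ p`. -/
def letterCode (xhat : Fml) {m : ℕ} (a : Fin m) : Fml :=
  circ xhat (Cform (a.val + 1)) (.var 0)

/-- Formal alphabetic-formula trees over the alphabet `Fin m`. -/
inductive ATree (m : ℕ) : Type where
  | leaf : Fin m → ATree m
  | node : ATree m → ATree m → ATree m

/-- The word associated with an alphabetic formula. -/
def ATree.word {m : ℕ} : ATree m → List (Fin m)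
  | .leaf a => [a]
  | .node l r => l.word ++ r.word

/-- The `{→}`-formula denoted by an alphabetic-formula tree. -/
def ATree.toFml {m : ℕ} (xhat : Fml) : ATree m → Fml
  | .leaf a => letterCode xhat a
  | .node l r => dot xhat (l.toFml xhat) (r.toFml xhat)

/-- `A` is an alphabetic formula (an `𝒜`-formula). -/
def IsAForm (m : ℕ) (xhat : Fml) (A : Fml) : Prop := ∃ t : ATree m, t.toFml xhat = A

/-- The code `͞α` of a word `α`: the set of all `𝒜`-formulas `A` with `word(A) = α`. -/
def codeSet {m : ℕ} (xhat : Fml) (α : List (Fin m)) : Set Fml :=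
  { A | ∃ t : ATree m, t.word = α ∧ t.toFml xhat = A }

/-- `A*`: the set of substitution instances of `A`. -/
def Inst (A : Fml) : Set Fml := { B | ∃ σ, Fml.subst σ A = B }

/-- `M*`: the set of substitution instances of members of `M`. -/
def InstSet (M : Set Fml) : Set Fml := { B | ∃ A ∈ M, ∃ σ, Fml.subst σ A = B }

/-- A tag system over the alphabet `Fin m`: the words `ω₁, …, ω_m` and the
deletion number `d`. -/
structure TagSystem (m : ℕ) where
  W : Fin m → List (Fin m)
  d : ℕ

/-- One-step production: `ξ ↦_T ζ` iff `ξ = aᵢβγ` with `|β| = d − 1` and `ζ = γωᵢ`. -/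
def TagStep {m : ℕ} (T : TagSystem m) (ξ ζ : List (Fin m)) : Prop :=
  ∃ (i : Fin m) (β γ : List (Fin m)),
    β.length = T.d - 1 ∧ ξ = i :: (β ++ γ) ∧ ζ = γ ++ T.W i

/-- `ξ ⟾_T ζ`: reflexive-transitive closure of one-step production. -/
def TagProd {m : ℕ} (T : TagSystem m) : List (Fin m) → List (Fin m) → Prop :=
  Relation.ReflTransGen (TagStep T)

/-- `T` halts on `ξ`. -/
def TagHalts {m : ℕ} (T : TagSystem m) (ξ : List (Fin m)) : Prop :=
  ∃ ζ, TagProd T ξ ζ ∧ ζ.length < T.d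

/-- The variables `x, y, z, u` used in the axiom schemes. -/
def Xv : Fml := .var 1
def Yv : Fml := .var 2
def Zv : Fml := .var 3
def Uv : Fml := .var 4

/-- The axioms (R₁)–(R₄). -/
def Raxioms (xhat : Fml) : Set Fml :=
  { .imp (dot xhat Xv (dot xhat Yv Zv)) (dot xhat (dot xhat Xv Yv) Zv),
    .imp (dot xhat (dot xhat Xv Yv) Zv) (dot xhat Xv (dot xhat Yv Zv)),
    .imp (dot xhat (dot xhat Xv (dot xhat Yv Zv)) Uv)
      (dot xhat (dot xhat (dot xhat Xv Yv) Zv) Uv),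
    .imp (dot xhat (dot xhat (dot xhat Xv Yv) Zv) Uv)
      (dot xhat (dot xhat Xv (dot xhat Yv Zv)) Uv) }

/-- The axioms (T₁) and (T₂) of `P_T`. -/
def Taxioms {m : ℕ} (xhat : Fml) (T : TagSystem m) : Set Fml :=
  { F | ∃ (i : Fin m) (α : List (Fin m)) (A B : Fml),
      α.length = T.d - 1 ∧ A ∈ codeSet xhat (i :: α) ∧ B ∈ codeSet xhat (T.W i) ∧
      (F = .imp (dot xhat A Xv) (dot xhat Xv B) ∨ F = .imp A B) }

/-- The calculus `P_T`. -/
def PT {m : ℕ} (xhat : Fml) (T : TagSystem m) : Set Fml := Taxioms xhat T ∪ Raxioms xhat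

/-- `P ⊢ A ⇒ B`: there are `C₀ = A, …, C_n = B` with `P ⊢ Cᵢ → Cᵢ₊₁` for all `i`. -/
def DChain (P : Set Fml) : Fml → Fml → Prop :=
  Relation.ReflTransGen (fun C D => Fml.Deriv P (.imp C D))

/-- `T_α`: the set of `𝒜`-formulas `A` with `α ⟾_T word(A)`. -/
def Tset {m : ℕ} (xhat : Fml) (T : TagSystem m) (α : List (Fin m)) : Set Fml :=
  { A | ∃ t : ATree m, t.toFml xhat = A ∧ TagProd T α t.word }

/-- The halting-condition axioms (H) for the calculus `P₀`. -/
def Haxioms {m : ℕ} (xhat : Fml) (T : TagSystem m) (P₀ : Finset Fml) : Set Fml :=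
  { F | ∃ (α : List (Fin m)) (A B : Fml), α ≠ [] ∧ α.length < T.d ∧
      A ∈ codeSet xhat α ∧ B ∈ P₀ ∧ F = .imp A B }

/-- The calculus `P_{T,P₀}`. -/
def PTP0 {m : ℕ} (xhat : Fml) (T : TagSystem m) (P₀ : Finset Fml) : Set Fml :=
  PT xhat T ∪ Haxioms xhat T P₀

/-- The calculus `P_{T,P₀,ξ}`. -/
def PTP0xi {m : ℕ} (xhat : Fml) (T : TagSystem m) (P₀ : Finset Fml)
    (ξ : List (Fin m)) : Set Fml :=
  PT xhat T ∪ Haxioms xhat T P₀ ∪ codeSet xhat ξ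

/-- `⟨P⟩`: formulas obtained from `P` by one application of modus ponens or
substitution. -/
def stepOnce (P : Set Fml) : Set Fml :=
  { B | ∃ A, A ∈ P ∧ Fml.imp A B ∈ P } ∪ { B | ∃ A ∈ P, ∃ σ, Fml.subst σ A = B }

/-- `⟨P⟩_n`. -/
def stepIter (P : Set Fml) : ℕ → Set Fml
  | 0 => P
  | n + 1 => stepOnce (stepIter P n)

/-- The single axiom `x → (y → x)`. -/
def Kax : Fml := .imp (.var 0) (.imp (.var 1) (.var 0))

/-- An effective encoding of `{→}`-formulas as natural numbers. -/
def encFml : Fml → ℕ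
  | .var n => Nat.pair 0 n
  | .imp A B => Nat.pair 1 (Nat.pair (encFml A) (encFml B))

/-- The fixed effective encoding of `{→}`-calculi (finite sets of formulas)
as natural numbers. -/
def encCalc (P : Finset Fml) : ℕ :=
  Encodable.encode ((P.image encFml).sort (· ≤ ·))


/-! ### Auxiliary material for `R_chain` -/

lemma subst_subst' (σ τ : ℕ → Fml) (A : Fml) :
    Fml.subst σ (Fml.subst τ A) = Fml.subst (fun n => Fml.subst σ (τ n)) A := by
  induction A with
  | var n => rfl
  | imp A B ihA ihB => simp [Fml.subst, ihA, ihB]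

lemma subst_ext' {σ τ : ℕ → Fml} {A : Fml} (h : ∀ n ∈ A.fvars, σ n = τ n) :
    Fml.subst σ A = Fml.subst τ A := by
  induction A with
  | var n => exact h n (by simp [Fml.fvars])
  | imp A B ihA ihB =>
    simp only [Fml.subst, Fml.imp.injEq]
    exact ⟨ihA fun n hn => h n (by simp [Fml.fvars, hn]),
           ihB fun n hn => h n (by simp [Fml.fvars, hn])⟩

lemma hat_subst {xhat : Fml} (hx : xhat.fvars = {0}) (σ : ℕ → Fml) (B : Fml) :
    Fml.subst σ (hat xhat B) = hat xhat (Fml.subst σ B) := by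
  unfold hat
  rw [subst_subst']
  apply subst_ext'
  intro n hn
  rw [hx] at hn
  simp only [Finset.mem_singleton] at hn
  subst hn
  simp

lemma circ_subst {xhat : Fml} (hx : xhat.fvars = {0}) (σ : ℕ → Fml) (A B : Fml) :
    Fml.subst σ (circ xhat A B) = circ xhat (Fml.subst σ A) (Fml.subst σ B) := by
  simp [circ, Fml.subst, hat_subst hx]

lemma dot_subst {xhat : Fml} (hx : xhat.fvars = {0}) (σ : ℕ → Fml) (A B : Fml) :
    Fml.subst σ (dot xhat A B) = dot xhat (Fml.subst σ A) (Fml.subst σ B) := by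
  unfold dot
  rw [circ_subst hx]
  rfl

section Deriv
variable {xhat : Fml} (hx : xhat.fvars = {0})

private def σ3 (A B C : Fml) : ℕ → Fml :=
  fun n => if n = 1 then A else if n = 2 then B else if n = 3 then C else .var n

private def σ4 (A B C D : Fml) : ℕ → Fml :=
  fun n => if n = 1 then A else if n = 2 then B else if n = 3 then C else
    if n = 4 then D else .var n

include hx

lemma derivR1 (A B C : Fml) :
    Fml.Deriv (Raxioms xhat)
      (.imp (dot xhat A (dot xhat B C)) (dot xhat (dot xhat A B) C)) := by
  have h : Fml.Deriv (Raxioms xhat)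
      (.imp (dot xhat Xv (dot xhat Yv Zv)) (dot xhat (dot xhat Xv Yv) Zv)) :=
    Fml.Deriv.ax (by simp [Raxioms])
  have h2 := Fml.Deriv.sub (σ3 A B C) h
  have e : ∀ X Y : Fml, Fml.subst (σ3 A B C) (.imp X Y)
      = .imp (Fml.subst (σ3 A B C) X) (Fml.subst (σ3 A B C) Y) := fun _ _ => rfl
  rw [e] at h2
  simp only [dot_subst hx] at h2
  simpa [Fml.subst, Xv, Yv, Zv, σ3] using h2

lemma derivR2 (A B C : Fml) :
    Fml.Deriv (Raxioms xhat)
      (.imp (dot xhat (dot xhat A B) C) (dot xhat A (dot xhat B C))) := by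
  have h : Fml.Deriv (Raxioms xhat)
      (.imp (dot xhat (dot xhat Xv Yv) Zv) (dot xhat Xv (dot xhat Yv Zv))) :=
    Fml.Deriv.ax (by simp [Raxioms])
  have h2 := Fml.Deriv.sub (σ3 A B C) h
  have e : ∀ X Y : Fml, Fml.subst (σ3 A B C) (.imp X Y)
      = .imp (Fml.subst (σ3 A B C) X) (Fml.subst (σ3 A B C) Y) := fun _ _ => rfl
  rw [e] at h2
  simp only [dot_subst hx] at h2
  simpa [Fml.subst, Xv, Yv, Zv, σ3] using h2

lemma derivR3 (A B C D : Fml) :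
    Fml.Deriv (Raxioms xhat)
      (.imp (dot xhat (dot xhat A (dot xhat B C)) D)
        (dot xhat (dot xhat (dot xhat A B) C) D)) := by
  have h : Fml.Deriv (Raxioms xhat)
      (.imp (dot xhat (dot xhat Xv (dot xhat Yv Zv)) Uv)
        (dot xhat (dot xhat (dot xhat Xv Yv) Zv) Uv)) :=
    Fml.Deriv.ax (by simp [Raxioms])
  have h2 := Fml.Deriv.sub (σ4 A B C D) h
  have e : ∀ X Y : Fml, Fml.subst (σ4 A B C D) (.imp X Y)
      = .imp (Fml.subst (σ4 A B C D) X) (Fml.subst (σ4 A B C D) Y) := fun _ _ => rfl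
  rw [e] at h2
  simp only [dot_subst hx] at h2
  simpa [Fml.subst, Xv, Yv, Zv, Uv, σ4] using h2

lemma derivR4 (A B C D : Fml) :
    Fml.Deriv (Raxioms xhat)
      (.imp (dot xhat (dot xhat (dot xhat A B) C) D)
        (dot xhat (dot xhat A (dot xhat B C)) D)) := by
  have h : Fml.Deriv (Raxioms xhat)
      (.imp (dot xhat (dot xhat (dot xhat Xv Yv) Zv) Uv)
        (dot xhat (dot xhat Xv (dot xhat Yv Zv)) Uv)) :=
    Fml.Deriv.ax (by simp [Raxioms])
  have h2 := Fml.Deriv.sub (σ4 A B C D) h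
  have e : ∀ X Y : Fml, Fml.subst (σ4 A B C D) (.imp X Y)
      = .imp (Fml.subst (σ4 A B C D) X) (Fml.subst (σ4 A B C D) Y) := fun _ _ => rfl
  rw [e] at h2
  simp only [dot_subst hx] at h2
  simpa [Fml.subst, Xv, Yv, Zv, Uv, σ4] using h2

end Deriv

/-- Symmetric one-step relation: both implications derivable from `R`. -/
def SRel (xhat : Fml) (C D : Fml) : Prop :=
  Fml.Deriv (Raxioms xhat) (.imp C D) ∧ Fml.Deriv (Raxioms xhat) (.imp D C)

/-- Chains of `SRel` steps. -/
def Ch (xhat : Fml) : Fml → Fml → Prop := Relation.ReflTransGen (SRel xhat)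

lemma SRel.symm' {xhat : Fml} : Symmetric (SRel xhat) := fun _ _ h => ⟨h.2, h.1⟩

section Steps
variable {xhat : Fml} (hx : xhat.fvars = {0})
include hx

lemma s12 (A B C : Fml) :
    SRel xhat (dot xhat A (dot xhat B C)) (dot xhat (dot xhat A B) C) :=
  ⟨derivR1 hx A B C, derivR2 hx A B C⟩

lemma s34 (A B C D : Fml) :
    SRel xhat (dot xhat (dot xhat A (dot xhat B C)) D)
      (dot xhat (dot xhat (dot xhat A B) C) D) :=
  ⟨derivR3 hx A B C D, derivR4 hx A B C D⟩

end Steps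

/-- The right comb with word `a :: l`. -/
def rcomb {m : ℕ} : Fin m → List (Fin m) → ATree m
  | a, [] => .leaf a
  | a, b :: l => .node (.leaf a) (rcomb b l)

lemma rcomb_word {m : ℕ} (a : Fin m) (l : List (Fin m)) :
    (rcomb a l).word = a :: l := by
  induction l generalizing a with
  | nil => rfl
  | cons b l ih => simp [rcomb, ATree.word, ih]

section Main
variable {xhat : Fml} (hx : xhat.fvars = {0}) {m : ℕ}
include hx

lemma flattenRoot : ∀ (r l : ATree m), ∃ (Q : ATree m) (b : Fin m),
    Ch xhat ((ATree.node l r).toFml xhat) ((ATree.node Q (.leaf b)).toFml xhat) ∧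
    (ATree.node Q (.leaf b)).word = (ATree.node l r).word := by
  intro r
  induction r with
  | leaf b => exact fun l => ⟨l, b, .refl, rfl⟩
  | node r1 r2 ih1 ih2 =>
    intro l
    obtain ⟨Q, b, hch, hw⟩ := ih2 (.node l r1)
    refine ⟨Q, b, .head ?_ hch, ?_⟩
    · exact s12 hx _ _ _
    · simp only [ATree.word] at hw ⊢
      rw [hw, List.append_assoc]

lemma flattenLeft : ∀ (r l : ATree m) (C : Fml), ∃ (Q : ATree m) (b : Fin m),
    Ch xhat (dot xhat ((ATree.node l r).toFml xhat) C)
      (dot xhat ((ATree.node Q (.leaf b)).toFml xhat) C) ∧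
    (ATree.node Q (.leaf b)).word = (ATree.node l r).word := by
  intro r
  induction r with
  | leaf b => exact fun l C => ⟨l, b, .refl, rfl⟩
  | node r1 r2 ih1 ih2 =>
    intro l C
    obtain ⟨Q, b, hch, hw⟩ := ih2 (.node l r1) C
    refine ⟨Q, b, .head ?_ hch, ?_⟩
    · exact s34 hx _ _ _ _
    · simp only [ATree.word] at hw ⊢
      rw [hw, List.append_assoc]

omit hx in
lemma word_length_pos {m : ℕ} (t : ATree m) : 0 < t.word.length := by
  induction t with
  | leaf a => simp [ATree.word]
  | node l r ihl ihr => simp [ATree.word]; omega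

lemma main2 : ∀ (n : ℕ) (P : ATree m), P.word.length ≤ n →
    ∀ (c : Fin m) (lst : List (Fin m)),
    ∃ (a : Fin m) (l' : List (Fin m)), P.word ++ (c :: lst) = a :: l' ∧
      Ch xhat (dot xhat (P.toFml xhat) ((rcomb c lst).toFml xhat))
        ((rcomb a l').toFml xhat) := by
  intro n
  induction n with
  | zero => intro P hP; exact absurd hP (by have := word_length_pos P; omega)
  | succ n ih =>
    intro P hP c lst
    match P with
    | .leaf a =>
      exact ⟨a, c :: lst, rfl, .refl⟩
    | .node l r =>
      obtain ⟨Q, b, hch, hw⟩ := flattenLeft hx r l ((rcomb c lst).toFml xhat)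
      have hstep : SRel xhat
          (dot xhat ((ATree.node Q (.leaf b)).toFml xhat) ((rcomb c lst).toFml xhat))
          (dot xhat (Q.toFml xhat) ((rcomb b (c :: lst)).toFml xhat)) := by
        have : (rcomb b (c :: lst)).toFml xhat
            = dot xhat ((ATree.leaf b : ATree m).toFml xhat) ((rcomb c lst).toFml xhat) := rfl
        rw [this]
        exact SRel.symm' (s12 hx _ _ _)
      have hQlen : Q.word.length ≤ n := by
        have h1 := congrArg List.length hw
        simp only [ATree.word, List.length_append, List.length_cons,
          List.length_nil] at h1
        have h2 := word_length_pos r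
        simp only [ATree.word, List.length_append] at hP
        omega
      obtain ⟨a, l', hw2, hch2⟩ := ih Q hQlen b (c :: lst)
      refine ⟨a, l', ?_, ?_⟩
      · have : Q.word ++ (b :: c :: lst) = (Q.word ++ [b]) ++ (c :: lst) := by
          simp
        rw [← hw2, this]
        have : (Q.word ++ [b]) = (ATree.node Q (.leaf b) : ATree m).word := rfl
        rw [this, hw]
      · exact (hch.trans (Relation.ReflTransGen.head hstep .refl)).trans hch2

lemma mainNorm (t : ATree m) : ∃ (a : Fin m) (l : List (Fin m)),
    t.word = a :: l ∧ Ch xhat (t.toFml xhat) ((rcomb a l).toFml xhat) := by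
  match t with
  | .leaf a => exact ⟨a, [], rfl, .refl⟩
  | .node l r =>
    obtain ⟨Q, b, hch, hw⟩ := flattenRoot hx r l
    have h2 : (ATree.node Q (.leaf b)).toFml xhat
        = dot xhat (Q.toFml xhat) ((rcomb b []).toFml xhat) := rfl
    obtain ⟨a, l', hw2, hch2⟩ := main2 hx Q.word.length Q le_rfl b []
    refine ⟨a, l', ?_, ?_⟩
    · rw [← hw, ← hw2]; rfl
    · exact hch.trans (h2 ▸ hch2)

end Main


/-- Let `R` be the calculus with axioms (R₁)–(R₄). For every
nonempty word `α` over `𝒜` and all `𝒜`-formulas `A, B` with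
`word(A) = word(B) = α`, one has `R ⊢ A ⇒ B`. -/
theorem R_chain (xhat : Fml) (hx : xhat.fvars = {0})
    (m : ℕ) (α : List (Fin m)) (hα : α ≠ [])
    (A B : Fml) (hA : A ∈ codeSet xhat α) (hB : B ∈ codeSet xhat α) :
    DChain (Raxioms xhat) A B := by
  obtain ⟨t, htw, htf⟩ := hA
  obtain ⟨s, hsw, hsf⟩ := hB
  obtain ⟨a, l, hw1, hc1⟩ := mainNorm hx t
  obtain ⟨a', l', hw2, hc2⟩ := mainNorm hx s
  rw [htw] at hw1
  rw [hsw] at hw2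
  rw [hw1] at hw2
  obtain ⟨rfl, rfl⟩ : a = a' ∧ l = l' := by
    injection hw2 with h1 h2; exact ⟨h1, h2⟩
  have hc : Ch xhat A B := by
    rw [← htf, ← hsf]
    exact hc1.trans ((@Relation.ReflTransGen.symmetric _ _ ⟨fun _ _ h => SRel.symm' h⟩).symm _ _ hc2)
  exact Relation.ReflTransGen.mono (p := fun C D => Fml.Deriv (Raxioms xhat) (.imp C D)) (fun C D (h : SRel xhat C D) => h.1) A B hc

end PC
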